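/- Call-by-name simulation of the λμ-calculus by the λ̄μμ̃-calculus: if a λμ-term (or command) t reduces to v by one call-by-name λμ-reduction step, then there exists a λ̄μμ̃-term (or command) u such that t† reduces to u by zero or more call-by-name λ̄μμ̃-reduction steps and v† reduces to u by zero or more linear call-by-name λ̄μμ̃-reduction steps. -/

import Mathlib

set_option autoImplicit true

namespace CHSim

/-- Lift a de Bruijn renaming under a binder. -/
def upr (ξ : ℕ → ℕ) : ℕ → ℕ
  | 0 => 0
  | k+1 => ξ k + 1

/-! ## The λμ-calculus (de Bruijn representation).

λ-variables and μ-variables each have their own name space of de Bruijn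
indices.  `abs t` is `λx.t` (binding λ-index 0) and `mabs c` is `μα.c`
(binding μ-index 0); `cmd a t` is the command `[a]t`. -/

mutual
  inductive Tm : Type
    | var : ℕ → Tm
    | abs : Tm → Tm
    | app : Tm → Tm → Tm
    | mabs : Cm → Tm
  inductive Cm : Type
    | cmd : ℕ → Tm → Cm
end

/-- λμ-contexts `e ::= ⟨α⟩ | ⟨β⟩(t ·) | e · t`. -/
inductive Ct : Type
  | cvar : ℕ → Ct
  | push : ℕ → Tm → Ct
  | cons : Ct → Tm → Ct

/-- Filling a λμ-context with a term: `⟨α⟩⟨t⟩ = [α]t`,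
`(⟨β⟩(u ·))⟨t⟩ = [β](u t)`, `(h · u)⟨t⟩ = h⟨t u⟩`. -/
def fill : Ct → Tm → Cm
  | .cvar a, t => .cmd a t
  | .push b u, t => .cmd b (.app u t)
  | .cons h u, t => fill h (.app t u)

mutual
  /-- Renaming of λ-variables in λμ-terms. -/
  def renLT (ξ : ℕ → ℕ) : Tm → Tm
    | .var x => .var (ξ x)
    | .abs t => .abs (renLT (upr ξ) t)
    | .app t u => .app (renLT ξ t) (renLT ξ u)
    | .mabs c => .mabs (renLC ξ c)
  /-- Renaming of λ-variables in λμ-commands. -/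
  def renLC (ξ : ℕ → ℕ) : Cm → Cm
    | .cmd a t => .cmd a (renLT ξ t)
end

mutual
  /-- Renaming of μ-variables in λμ-terms. -/
  def renMT (ξ : ℕ → ℕ) : Tm → Tm
    | .var x => .var x
    | .abs t => .abs (renMT ξ t)
    | .app t u => .app (renMT ξ t) (renMT ξ u)
    | .mabs c => .mabs (renMC (upr ξ) c)
  /-- Renaming of μ-variables in λμ-commands. -/
  def renMC (ξ : ℕ → ℕ) : Cm → Cm
    | .cmd a t => .cmd (ξ a) (renMT ξ t)
end

/-- Renaming of λ-variables in λμ-contexts. -/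
def renLE (ξ : ℕ → ℕ) : Ct → Ct
  | .cvar a => .cvar a
  | .push b t => .push b (renLT ξ t)
  | .cons e t => .cons (renLE ξ e) (renLT ξ t)

/-- Renaming of μ-variables in λμ-contexts. -/
def renME (ξ : ℕ → ℕ) : Ct → Ct
  | .cvar a => .cvar (ξ a)
  | .push b t => .push (ξ b) (renMT ξ t)
  | .cons e t => .cons (renME ξ e) (renMT ξ t)

/-- Lifting a λ-substitution under a λ-binder. -/
def upsL (σ : ℕ → Tm) : ℕ → Tm
  | 0 => .var 0
  | k+1 => renLT Nat.succ (σ k)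

mutual
  /-- (Capture-avoiding) substitution for λ-variables in λμ-terms. -/
  def lsubT (σ : ℕ → Tm) : Tm → Tm
    | .var x => σ x
    | .abs t => .abs (lsubT (upsL σ) t)
    | .app t u => .app (lsubT σ t) (lsubT σ u)
    | .mabs c => .mabs (lsubC (fun k => renMT Nat.succ (σ k)) c)
  /-- Substitution for λ-variables in λμ-commands. -/
  def lsubC (σ : ℕ → Tm) : Cm → Cm
    | .cmd a t => .cmd a (lsubT σ t)
end

/-- Substitution for λ-variables in λμ-contexts. -/
def lsubE (σ : ℕ → Tm) : Ct → Ct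
  | .cvar a => .cvar a
  | .push b t => .push b (lsubT σ t)
  | .cons e t => .cons (lsubE σ e) (lsubT σ t)

/-- The substitution replacing the λ-variable `x` by `u`. -/
def sub1L (x : ℕ) (u : Tm) : ℕ → Tm := fun k => if k = x then u else .var k

/-- The β-substitution replacing the bound λ-variable 0 by `u`. -/
def sub0L (u : Tm) : ℕ → Tm
  | 0 => u
  | k+1 => .var k

/-- Lifting a structural (μ-)substitution under a μ-binder. -/
def upsM (σ : ℕ → Ct) : ℕ → Ct
  | 0 => .cvar 0
  | k+1 => renME Nat.succ (σ k)

mutual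
  /-- Structural substitution of λμ-contexts for μ-variables in λμ-terms:
  every subcommand `[α]u` is replaced by `(σ α)⟨u[σ]⟩`. -/
  def msubT (σ : ℕ → Ct) : Tm → Tm
    | .var x => .var x
    | .abs t => .abs (msubT (fun k => renLE Nat.succ (σ k)) t)
    | .app t u => .app (msubT σ t) (msubT σ u)
    | .mabs c => .mabs (msubC (upsM σ) c)
  /-- Structural substitution in λμ-commands. -/
  def msubC (σ : ℕ → Ct) : Cm → Cm
    | .cmd a t => fill (σ a) (msubT σ t)
end

/-- Structural substitution in λμ-contexts (the head variable of
`⟨β⟩(t ·)` is, by the freshness convention of the translations,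
never the substituted variable, so it is left untouched). -/
def msubE (σ : ℕ → Ct) : Ct → Ct
  | .cvar a => σ a
  | .push b t => .push b (msubT σ t)
  | .cons e t => .cons (msubE σ e) (msubT σ t)

/-- The structural substitution replacing the μ-variable `a` by the context `e`. -/
def sub1M (a : ℕ) (e : Ct) : ℕ → Ct := fun k => if k = a then e else .cvar k

/-- The structural substitution replacing the bound μ-variable 0 by the
context `e` (removing the binder). -/
def sub0M (e : Ct) : ℕ → Ct
  | 0 => e
  | k+1 => .cvar k

mutual
  /-- Number of free occurrences of the λ-variable `x` in a λμ-term. -/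
  def cntLT (x : ℕ) : Tm → ℕ
    | .var y => if y = x then 1 else 0
    | .abs t => cntLT (x+1) t
    | .app t u => cntLT x t + cntLT x u
    | .mabs c => cntLC x c
  /-- Number of free occurrences of the λ-variable `x` in a λμ-command. -/
  def cntLC (x : ℕ) : Cm → ℕ
    | .cmd _ t => cntLT x t
end

/-- λμ-values `v ::= x | λx.t`. -/
inductive IsVal : Tm → Prop
  | var (x : ℕ) : IsVal (.var x)
  | abs (t : Tm) : IsVal (.abs t)

/-! ### Reduction in λμ: congruence closure of root rules -/

mutual
  /-- Congruence (compatible) closure of root relations, term level. -/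
  inductive KT (R1 : Tm → Tm → Prop) (R2 : Cm → Cm → Prop) : Tm → Tm → Prop
    | root {t t'} : R1 t t' → KT R1 R2 t t'
    | absC {t t'} : KT R1 R2 t t' → KT R1 R2 (.abs t) (.abs t')
    | appL {t t'} (u) : KT R1 R2 t t' → KT R1 R2 (.app t u) (.app t' u)
    | appR (t) {u u'} : KT R1 R2 u u' → KT R1 R2 (.app t u) (.app t u')
    | mabsC {c c'} : KC R1 R2 c c' → KT R1 R2 (.mabs c) (.mabs c')
  /-- Congruence (compatible) closure of root relations, command level. -/
  inductive KC (R1 : Tm → Tm → Prop) (R2 : Cm → Cm → Prop) : Cm → Cm → Prop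
    | root {c c'} : R2 c c' → KC R1 R2 c c'
    | cmdC (a) {t t'} : KT R1 R2 t t' → KC R1 R2 (.cmd a t) (.cmd a t')
end

/-- Term-level root rules of the undirected λμ-calculus: β, μ, μ', θ. -/
inductive RootT : Tm → Tm → Prop
  | beta (u t : Tm) : RootT (.app (.abs u) t) (lsubT (sub0L t) u)
  | mu (c : Cm) (t : Tm) : RootT (.app (.mabs c) t)
      (.mabs (msubC (sub1M 0 (.cons (.cvar 0) (renMT Nat.succ t))) c))
  | mu' (t : Tm) (c : Cm) : RootT (.app t (.mabs c))
      (.mabs (msubC (sub1M 0 (.push 0 (renMT Nat.succ t))) c))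
  | theta (t : Tm) : RootT (.mabs (.cmd 0 (renMT Nat.succ t))) t

/-- Command-level root rule of the λμ-calculus: ρ. -/
inductive RootC : Cm → Cm → Prop
  | rho (b : ℕ) (c : Cm) : RootC (.cmd b (.mabs c)) (msubC (sub0M (.cvar b)) c)

/-- Term-level *linear* root rules of the λμ-calculus: θ, and β when the
argument is a variable or the bound variable occurs exactly once. -/
inductive RootTlin : Tm → Tm → Prop
  | beta (u t : Tm) : ((∃ y, t = Tm.var y) ∨ cntLT 0 u = 1) →
      RootTlin (.app (.abs u) t) (lsubT (sub0L t) u)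
  | theta (t : Tm) : RootTlin (.mabs (.cmd 0 (renMT Nat.succ t))) t

/-- Term-level root rules of call-by-name λμ: β, μ, θ (no μ'). -/
inductive RootTn : Tm → Tm → Prop
  | beta (u t : Tm) : RootTn (.app (.abs u) t) (lsubT (sub0L t) u)
  | mu (c : Cm) (t : Tm) : RootTn (.app (.mabs c) t)
      (.mabs (msubC (sub1M 0 (.cons (.cvar 0) (renMT Nat.succ t))) c))
  | theta (t : Tm) : RootTn (.mabs (.cmd 0 (renMT Nat.succ t))) t

/-- Term-level root rules of call-by-value λμ: βv, μv, μ', θ. -/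
inductive RootTv : Tm → Tm → Prop
  | betav (u t : Tm) : IsVal t → RootTv (.app (.abs u) t) (lsubT (sub0L t) u)
  | muv (c : Cm) (t : Tm) : IsVal t → RootTv (.app (.mabs c) t)
      (.mabs (msubC (sub1M 0 (.cons (.cvar 0) (renMT Nat.succ t))) c))
  | mu' (t : Tm) (c : Cm) : RootTv (.app t (.mabs c))
      (.mabs (msubC (sub1M 0 (.push 0 (renMT Nat.succ t))) c))
  | theta (t : Tm) : RootTv (.mabs (.cmd 0 (renMT Nat.succ t))) t

/-- Term-level *linear call-by-value* root rules of λμ. -/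
inductive RootTvlin : Tm → Tm → Prop
  | betav (u t : Tm) : IsVal t → ((∃ y, t = Tm.var y) ∨ cntLT 0 u = 1) →
      RootTvlin (.app (.abs u) t) (lsubT (sub0L t) u)
  | theta (t : Tm) : RootTvlin (.mabs (.cmd 0 (renMT Nat.succ t))) t

/-- One-step λμ-reduction (β, μ, μ', ρ, θ), terms. -/
abbrev StepT := KT RootT RootC
/-- One-step λμ-reduction (β, μ, μ', ρ, θ), commands. -/
abbrev StepC := KC RootT RootC
/-- One-step linear λμ-reduction, terms. -/
abbrev LStepT := KT RootTlin RootC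
/-- One-step linear λμ-reduction, commands. -/
abbrev LStepC := KC RootTlin RootC
/-- One-step call-by-name λμ-reduction, terms. -/
abbrev StepNT := KT RootTn RootC
/-- One-step call-by-name λμ-reduction, commands. -/
abbrev StepNC := KC RootTn RootC
/-- One-step call-by-value λμ-reduction, terms. -/
abbrev StepVT := KT RootTv RootC
/-- One-step call-by-value λμ-reduction, commands. -/
abbrev StepVC := KC RootTv RootC
/-- One-step linear call-by-value λμ-reduction, terms. -/
abbrev LStepVT := KT RootTvlin RootC
/-- One-step linear call-by-value λμ-reduction, commands. -/
abbrev LStepVC := KC RootTvlin RootC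

/-- Reflexive-transitive closure. -/
abbrev Star {α : Type} (r : α → α → Prop) : α → α → Prop := Relation.ReflTransGen r

/-! ## The λ̄μμ̃-calculus (de Bruijn representation). -/

mutual
  inductive BTm : Type
    | var : ℕ → BTm
    | abs : BTm → BTm
    | mabs : BCm → BTm
  inductive BCm : Type
    | cut : BTm → BCt → BCm
  inductive BCt : Type
    | cvar : ℕ → BCt
    | cons : BTm → BCt → BCt
    | tmu : BCm → BCt
end

mutual
  /-- Renaming of λ-variables in λ̄μμ̃-terms. -/
  def brenLT (ξ : ℕ → ℕ) : BTm → BTm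
    | .var x => .var (ξ x)
    | .abs t => .abs (brenLT (upr ξ) t)
    | .mabs c => .mabs (brenLC ξ c)
  def brenLC (ξ : ℕ → ℕ) : BCm → BCm
    | .cut t e => .cut (brenLT ξ t) (brenLE ξ e)
  def brenLE (ξ : ℕ → ℕ) : BCt → BCt
    | .cvar a => .cvar a
    | .cons t e => .cons (brenLT ξ t) (brenLE ξ e)
    | .tmu c => .tmu (brenLC (upr ξ) c)
end

mutual
  /-- Renaming of μ-variables in λ̄μμ̃-terms. -/
  def brenMT (ξ : ℕ → ℕ) : BTm → BTm
    | .var x => .var x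
    | .abs t => .abs (brenMT ξ t)
    | .mabs c => .mabs (brenMC (upr ξ) c)
  def brenMC (ξ : ℕ → ℕ) : BCm → BCm
    | .cut t e => .cut (brenMT ξ t) (brenME ξ e)
  def brenME (ξ : ℕ → ℕ) : BCt → BCt
    | .cvar a => .cvar (ξ a)
    | .cons t e => .cons (brenMT ξ t) (brenME ξ e)
    | .tmu c => .tmu (brenMC ξ c)
end

def bupsL (σ : ℕ → BTm) : ℕ → BTm
  | 0 => .var 0
  | k+1 => brenLT Nat.succ (σ k)

mutual
  /-- Substitution for λ-variables in λ̄μμ̃-terms. -/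
  def blsubT (σ : ℕ → BTm) : BTm → BTm
    | .var x => σ x
    | .abs t => .abs (blsubT (bupsL σ) t)
    | .mabs c => .mabs (blsubC (fun k => brenMT Nat.succ (σ k)) c)
  def blsubC (σ : ℕ → BTm) : BCm → BCm
    | .cut t e => .cut (blsubT σ t) (blsubE σ e)
  def blsubE (σ : ℕ → BTm) : BCt → BCt
    | .cvar a => .cvar a
    | .cons t e => .cons (blsubT σ t) (blsubE σ e)
    | .tmu c => .tmu (blsubC (bupsL σ) c)
end

def bsub1L (x : ℕ) (u : BTm) : ℕ → BTm := fun k => if k = x then u else .var k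

def bsub0L (u : BTm) : ℕ → BTm
  | 0 => u
  | k+1 => .var k

def bupsM (σ : ℕ → BCt) : ℕ → BCt
  | 0 => .cvar 0
  | k+1 => brenME Nat.succ (σ k)

mutual
  /-- Structural substitution of contexts for μ-variables in λ̄μμ̃-terms. -/
  def bmsubT (σ : ℕ → BCt) : BTm → BTm
    | .var x => .var x
    | .abs t => .abs (bmsubT (fun k => brenLE Nat.succ (σ k)) t)
    | .mabs c => .mabs (bmsubC (bupsM σ) c)
  def bmsubC (σ : ℕ → BCt) : BCm → BCm
    | .cut t e => .cut (bmsubT σ t) (bmsubE σ e)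
  def bmsubE (σ : ℕ → BCt) : BCt → BCt
    | .cvar a => σ a
    | .cons t e => .cons (bmsubT σ t) (bmsubE σ e)
    | .tmu c => .tmu (bmsubC (fun k => brenLE Nat.succ (σ k)) c)
end

def bsub1M (a : ℕ) (e : BCt) : ℕ → BCt := fun k => if k = a then e else .cvar k

def bsub0M (e : BCt) : ℕ → BCt
  | 0 => e
  | k+1 => .cvar k

mutual
  /-- Number of free occurrences of the λ-variable `x` in a λ̄μμ̃-term. -/
  def bcntLT (x : ℕ) : BTm → ℕ
    | .var y => if y = x then 1 else 0
    | .abs t => bcntLT (x+1) t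
    | .mabs c => bcntLC x c
  def bcntLC (x : ℕ) : BCm → ℕ
    | .cut t e => bcntLT x t + bcntLE x e
  def bcntLE (x : ℕ) : BCt → ℕ
    | .cvar _ => 0
    | .cons t e => bcntLT x t + bcntLE x e
    | .tmu c => bcntLC (x+1) c
end

mutual
  /-- Number of free occurrences of the μ-variable `a` in a λ̄μμ̃-term. -/
  def bcntMT (a : ℕ) : BTm → ℕ
    | .var _ => 0
    | .abs t => bcntMT a t
    | .mabs c => bcntMC (a+1) c
  def bcntMC (a : ℕ) : BCm → ℕ
    | .cut t e => bcntMT a t + bcntME a e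
  def bcntME (a : ℕ) : BCt → ℕ
    | .cvar b => if b = a then 1 else 0
    | .cons t e => bcntMT a t + bcntME a e
    | .tmu c => bcntMC a c
end

/-- λ̄μμ̃-values `v ::= x | λx.t`. -/
inductive BIsVal : BTm → Prop
  | var (x : ℕ) : BIsVal (.var x)
  | abs (t : BTm) : BIsVal (.abs t)

/-- Stacks (the contexts of λ̄μμ̃_T): `s ::= α | t · s`. -/
inductive IsStk : BCt → Prop
  | cvar (a : ℕ) : IsStk (.cvar a)
  | cons (t : BTm) {s : BCt} : IsStk s → IsStk (.cons t s)

/-! ### Reduction in λ̄μμ̃: congruence closure of root rules -/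

mutual
  inductive JT (R1 : BTm → BTm → Prop) (R2 : BCm → BCm → Prop) : BTm → BTm → Prop
    | root {t t'} : R1 t t' → JT R1 R2 t t'
    | absC {t t'} : JT R1 R2 t t' → JT R1 R2 (.abs t) (.abs t')
    | mabsC {c c'} : JC R1 R2 c c' → JT R1 R2 (.mabs c) (.mabs c')
  inductive JC (R1 : BTm → BTm → Prop) (R2 : BCm → BCm → Prop) : BCm → BCm → Prop
    | root {c c'} : R2 c c' → JC R1 R2 c c'
    | cutL {t t'} (e) : JT R1 R2 t t' → JC R1 R2 (.cut t e) (.cut t' e)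
    | cutR (t) {e e'} : JE R1 R2 e e' → JC R1 R2 (.cut t e) (.cut t e')
  inductive JE (R1 : BTm → BTm → Prop) (R2 : BCm → BCm → Prop) : BCt → BCt → Prop
    | consL {t t'} (e) : JT R1 R2 t t' → JE R1 R2 (.cons t e) (.cons t' e)
    | consR (t) {e e'} : JE R1 R2 e e' → JE R1 R2 (.cons t e) (.cons t e')
    | tmuC {c c'} : JC R1 R2 c c' → JE R1 R2 (.tmu c) (.tmu c')
end

/-- The term-level root rule of λ̄μμ̃: θ (shared by all evaluation disciplines). -/
inductive BRootT : BTm → BTm → Prop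
  | theta (t : BTm) : BRootT (.mabs (.cut (brenMT Nat.succ t) (.cvar 0))) t

/-- Command-level root rules of the undirected λ̄μμ̃-calculus: β, μ, μ̃. -/
inductive BRootC : BCm → BCm → Prop
  | beta (u t : BTm) (e : BCt) :
      BRootC (.cut (.abs u) (.cons t e)) (.cut t (.tmu (.cut u (brenLE Nat.succ e))))
  | mu (c : BCm) (e : BCt) : BRootC (.cut (.mabs c) e) (bmsubC (bsub0M e) c)
  | mutilde (t : BTm) (c : BCm) : BRootC (.cut t (.tmu c)) (blsubC (bsub0L t) c)

/-- Command-level *linear* root rules of λ̄μμ̃: β always; μ (resp. μ̃) when the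
substituted context (resp. term) is a variable or the bound variable occurs
exactly once in the command. -/
inductive BRootClin : BCm → BCm → Prop
  | beta (u t : BTm) (e : BCt) :
      BRootClin (.cut (.abs u) (.cons t e)) (.cut t (.tmu (.cut u (brenLE Nat.succ e))))
  | mu (c : BCm) (e : BCt) : ((∃ a, e = BCt.cvar a) ∨ bcntMC 0 c = 1) →
      BRootClin (.cut (.mabs c) e) (bmsubC (bsub0M e) c)
  | mutilde (t : BTm) (c : BCm) : ((∃ x, t = BTm.var x) ∨ bcntLC 0 c = 1) →
      BRootClin (.cut t (.tmu c)) (blsubC (bsub0L t) c)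

/-- Command-level root rules of call-by-name λ̄μμ̃ (λ̄μμ̃_T): β, μₙ (stacks), μ̃. -/
inductive BRootCn : BCm → BCm → Prop
  | beta (u t : BTm) (e : BCt) :
      BRootCn (.cut (.abs u) (.cons t e)) (.cut t (.tmu (.cut u (brenLE Nat.succ e))))
  | mun (c : BCm) (s : BCt) : IsStk s → BRootCn (.cut (.mabs c) s) (bmsubC (bsub0M s) c)
  | mutilde (t : BTm) (c : BCm) : BRootCn (.cut t (.tmu c)) (blsubC (bsub0L t) c)

/-- Command-level *linear call-by-name* root rules of λ̄μμ̃. -/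
inductive BRootCnlin : BCm → BCm → Prop
  | beta (u t : BTm) (e : BCt) :
      BRootCnlin (.cut (.abs u) (.cons t e)) (.cut t (.tmu (.cut u (brenLE Nat.succ e))))
  | mun (c : BCm) (s : BCt) : IsStk s → ((∃ a, s = BCt.cvar a) ∨ bcntMC 0 c = 1) →
      BRootCnlin (.cut (.mabs c) s) (bmsubC (bsub0M s) c)
  | mutilde (t : BTm) (c : BCm) : ((∃ x, t = BTm.var x) ∨ bcntLC 0 c = 1) →
      BRootCnlin (.cut t (.tmu c)) (blsubC (bsub0L t) c)

/-- Command-level root rules of call-by-value λ̄μμ̃ (λ̄μμ̃_Q): β, μ, μ̃ᵥ (values). -/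
inductive BRootCv : BCm → BCm → Prop
  | beta (u t : BTm) (e : BCt) :
      BRootCv (.cut (.abs u) (.cons t e)) (.cut t (.tmu (.cut u (brenLE Nat.succ e))))
  | mu (c : BCm) (e : BCt) : BRootCv (.cut (.mabs c) e) (bmsubC (bsub0M e) c)
  | mutildev (v : BTm) (c : BCm) : BIsVal v →
      BRootCv (.cut v (.tmu c)) (blsubC (bsub0L v) c)

/-- Command-level *linear call-by-value* root rules of λ̄μμ̃. -/
inductive BRootCvlin : BCm → BCm → Prop
  | beta (u t : BTm) (e : BCt) :
      BRootCvlin (.cut (.abs u) (.cons t e)) (.cut t (.tmu (.cut u (brenLE Nat.succ e))))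
  | mu (c : BCm) (e : BCt) : ((∃ a, e = BCt.cvar a) ∨ bcntMC 0 c = 1) →
      BRootCvlin (.cut (.mabs c) e) (bmsubC (bsub0M e) c)
  | mutildev (v : BTm) (c : BCm) : BIsVal v → ((∃ x, v = BTm.var x) ∨ bcntLC 0 c = 1) →
      BRootCvlin (.cut v (.tmu c)) (blsubC (bsub0L v) c)

/-- Command-level root rules with β' instead of β: β', μ, μ̃. -/
inductive BRootCp : BCm → BCm → Prop
  | beta' (u t : BTm) (e : BCt) :
      BRootCp (.cut (.abs u) (.cons t e)) (.cut (blsubT (bsub0L t) u) e)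
  | mu (c : BCm) (e : BCt) : BRootCp (.cut (.mabs c) e) (bmsubC (bsub0M e) c)
  | mutilde (t : BTm) (c : BCm) : BRootCp (.cut t (.tmu c)) (blsubC (bsub0L t) c)

/-- Command-level call-by-name root rules with β': β', μₙ, μ̃. -/
inductive BRootCnp : BCm → BCm → Prop
  | beta' (u t : BTm) (e : BCt) :
      BRootCnp (.cut (.abs u) (.cons t e)) (.cut (blsubT (bsub0L t) u) e)
  | mun (c : BCm) (s : BCt) : IsStk s → BRootCnp (.cut (.mabs c) s) (bmsubC (bsub0M s) c)
  | mutilde (t : BTm) (c : BCm) : BRootCnp (.cut t (.tmu c)) (blsubC (bsub0L t) c)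

/-- Command-level call-by-value root rules with β': β' (values), μ, μ̃ᵥ. -/
inductive BRootCvp : BCm → BCm → Prop
  | beta' (u v : BTm) (e : BCt) : BIsVal v →
      BRootCvp (.cut (.abs u) (.cons v e)) (.cut (blsubT (bsub0L v) u) e)
  | mu (c : BCm) (e : BCt) : BRootCvp (.cut (.mabs c) e) (bmsubC (bsub0M e) c)
  | mutildev (v : BTm) (c : BCm) : BIsVal v →
      BRootCvp (.cut v (.tmu c)) (blsubC (bsub0L v) c)

/-- One-step λ̄μμ̃-reduction (β, μ, μ̃, θ), terms. -/
abbrev BStepT := JT BRootT BRootC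
abbrev BStepC := JC BRootT BRootC
abbrev BStepE := JE BRootT BRootC
/-- One-step linear λ̄μμ̃-reduction. -/
abbrev LBStepT := JT BRootT BRootClin
abbrev LBStepC := JC BRootT BRootClin
abbrev LBStepE := JE BRootT BRootClin
/-- One-step call-by-name λ̄μμ̃-reduction. -/
abbrev BStepNT := JT BRootT BRootCn
abbrev BStepNC := JC BRootT BRootCn
abbrev BStepNE := JE BRootT BRootCn
/-- One-step linear call-by-name λ̄μμ̃-reduction. -/
abbrev LBStepNT := JT BRootT BRootCnlin
abbrev LBStepNC := JC BRootT BRootCnlin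
/-- One-step call-by-value λ̄μμ̃-reduction. -/
abbrev BStepVT := JT BRootT BRootCv
abbrev BStepVC := JC BRootT BRootCv
/-- One-step linear call-by-value λ̄μμ̃-reduction. -/
abbrev LBStepVT := JT BRootT BRootCvlin
abbrev LBStepVC := JC BRootT BRootCvlin
/-- One-step λ̄μμ̃-reduction with β' (β', μ, μ̃, θ). -/
abbrev BStepPT := JT BRootT BRootCp
abbrev BStepPC := JC BRootT BRootCp
/-- One-step call-by-name λ̄μμ̃-reduction with β'. -/
abbrev BStepNPT := JT BRootT BRootCnp
abbrev BStepNPC := JC BRootT BRootCnp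
/-- One-step call-by-value λ̄μμ̃-reduction with β'. -/
abbrev BStepVPT := JT BRootT BRootCvp
abbrev BStepVPC := JC BRootT BRootCvp

/-! ## The translation `(·)†` from λμ to λ̄μμ̃ -/

mutual
  /-- `x† = x`, `(λx.u)† = λx.u†`, `(u v)† = μβ.⟨v† | μ̃y.⟨u† | y·β⟩⟩`
  (`y`, `β` fresh, realized by de Bruijn lifting), `(μα.c)† = μα.c†`. -/
  def dagT : Tm → BTm
    | .var x => .var x
    | .abs t => .abs (dagT t)
    | .app u v => .mabs (.cut (brenMT Nat.succ (dagT v))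
        (.tmu (.cut (brenLT Nat.succ (brenMT Nat.succ (dagT u)))
          (.cons (.var 0) (.cvar 0)))))
    | .mabs c => .mabs (dagC c)
  /-- `([α]t)† = ⟨t† | α⟩`. -/
  def dagC : Cm → BCm
    | .cmd a t => .cut (dagT t) (.cvar a)
end

/-- `⟨α⟩† = α`, `(⟨β⟩(t ·))† = μ̃y.⟨t† | y·β⟩`, `(h · t)† = t† · h†`. -/
def dagE : Ct → BCt
  | .cvar a => .cvar a
  | .push b t => .tmu (.cut (brenLT Nat.succ (dagT t)) (.cons (.var 0) (.cvar b)))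
  | .cons e t => .cons (dagT t) (dagE e)

/-! ## The translation `(·)∘` from λ̄μμ̃ to λμ -/

mutual
  /-- `x∘ = x`, `(λx.u)∘ = λx.u∘`, `(μα.c)∘ = μα.c∘`. -/
  def circT : BTm → Tm
    | .var x => .var x
    | .abs t => .abs (circT t)
    | .mabs c => .mabs (circC c)
  /-- `⟨t | e⟩∘ = e∘⟨t∘⟩`. -/
  def circC : BCm → Cm
    | .cut t e => fill (circE e) (circT t)
  /-- `α∘ = ⟨α⟩`, `(t · h)∘ = h∘ · t∘`,
  `(μ̃x.c)∘ = ⟨β⟩((λx.μδ.c∘) ·)` with `δ ∉ c` (realized by lifting). -/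
  def circE : BCt → Ct
    | .cvar a => .cvar a
    | .cons t e => .cons (circE e) (circT t)
    | .tmu c => .push 0 (.abs (.mabs (renMC Nat.succ (circC c))))
end


/-! ### Auxiliary lemmas -/

theorem upr_upr (ξ ζ : ℕ → ℕ) : (fun k => upr ξ (upr ζ k)) = upr (fun k => ξ (ζ k)) :=
  funext fun k => by cases k <;> rfl

theorem upr_inj {ξ : ℕ → ℕ} (h : Function.Injective ξ) : Function.Injective (upr ξ) := by
  intro a b hab
  cases a with
  | zero => cases b with
    | zero => rfl
    | succ b => exact absurd hab (by simp [upr])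
  | succ a => cases b with
    | zero => exact absurd hab (by simp [upr])
    | succ b =>
      simp only [upr] at hab
      exact congrArg Nat.succ (h (Nat.succ_injective hab))

mutual
theorem brenLT_comp : ∀ (t : BTm) (ξ ζ), brenLT ξ (brenLT ζ t) = brenLT (fun k => ξ (ζ k)) t
  | .var x, _, _ => rfl
  | .abs t, ξ, ζ => by simp only [brenLT, brenLT_comp t, upr_upr]
  | .mabs c, ξ, ζ => by simp only [brenLT, brenLC_comp c]
theorem brenLC_comp : ∀ (c : BCm) (ξ ζ), brenLC ξ (brenLC ζ c) = brenLC (fun k => ξ (ζ k)) c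
  | .cut t e, ξ, ζ => by simp only [brenLC, brenLT_comp t, brenLE_comp e]
theorem brenLE_comp : ∀ (e : BCt) (ξ ζ), brenLE ξ (brenLE ζ e) = brenLE (fun k => ξ (ζ k)) e
  | .cvar a, _, _ => rfl
  | .cons t e, ξ, ζ => by simp only [brenLE, brenLT_comp t, brenLE_comp e]
  | .tmu c, ξ, ζ => by simp only [brenLE, brenLC_comp c, upr_upr]
end

mutual
theorem brenMT_comp : ∀ (t : BTm) (ξ ζ), brenMT ξ (brenMT ζ t) = brenMT (fun k => ξ (ζ k)) t
  | .var x, _, _ => rfl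
  | .abs t, ξ, ζ => by simp only [brenMT, brenMT_comp t]
  | .mabs c, ξ, ζ => by simp only [brenMT, brenMC_comp c, upr_upr]
theorem brenMC_comp : ∀ (c : BCm) (ξ ζ), brenMC ξ (brenMC ζ c) = brenMC (fun k => ξ (ζ k)) c
  | .cut t e, ξ, ζ => by simp only [brenMC, brenMT_comp t, brenME_comp e]
theorem brenME_comp : ∀ (e : BCt) (ξ ζ), brenME ξ (brenME ζ e) = brenME (fun k => ξ (ζ k)) e
  | .cvar a, _, _ => rfl
  | .cons t e, ξ, ζ => by simp only [brenME, brenMT_comp t, brenME_comp e]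
  | .tmu c, ξ, ζ => by simp only [brenME, brenMC_comp c]
end

mutual
theorem brenLM_T : ∀ (t : BTm) (ξ ζ), brenLT ξ (brenMT ζ t) = brenMT ζ (brenLT ξ t)
  | .var x, _, _ => rfl
  | .abs t, ξ, ζ => by simp only [brenLT, brenMT, brenLM_T t]
  | .mabs c, ξ, ζ => by simp only [brenLT, brenMT, brenLM_C c]
theorem brenLM_C : ∀ (c : BCm) (ξ ζ), brenLC ξ (brenMC ζ c) = brenMC ζ (brenLC ξ c)
  | .cut t e, ξ, ζ => by simp only [brenLC, brenMC, brenLM_T t, brenLM_E e]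
theorem brenLM_E : ∀ (e : BCt) (ξ ζ), brenLE ξ (brenME ζ e) = brenME ζ (brenLE ξ e)
  | .cvar a, _, _ => rfl
  | .cons t e, ξ, ζ => by simp only [brenLE, brenME, brenLM_T t, brenLM_E e]
  | .tmu c, ξ, ζ => by simp only [brenLE, brenME, brenLM_C c]
end
theorem bupsL_upr (σ : ℕ → BTm) (ζ : ℕ → ℕ) :
    (fun k => bupsL σ (upr ζ k)) = bupsL (fun k => σ (ζ k)) :=
  funext fun k => by cases k <;> rfl

theorem renL_bupsL (σ : ℕ → BTm) (ξ : ℕ → ℕ) :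
    (fun k => brenLT (upr ξ) (bupsL σ k)) = bupsL (fun k => brenLT ξ (σ k)) :=
  funext fun k => by
    cases k with
    | zero => rfl
    | succ k => simp only [bupsL, brenLT_comp]; rfl

theorem renM_bupsL (σ : ℕ → BTm) (ξ : ℕ → ℕ) :
    (fun k => brenMT ξ (bupsL σ k)) = bupsL (fun k => brenMT ξ (σ k)) :=
  funext fun k => by
    cases k with
    | zero => rfl
    | succ k => simp only [bupsL]; exact (brenLM_T (σ k) Nat.succ ξ).symm

theorem renLM_comm_sub (σ : ℕ → BTm) (ξ : ℕ → ℕ) :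
    (fun k => brenLT ξ (brenMT Nat.succ (σ k))) = (fun k => brenMT Nat.succ (brenLT ξ (σ k))) :=
  funext fun k => brenLM_T (σ k) ξ Nat.succ

theorem renMM_sub (σ : ℕ → BTm) (ξ : ℕ → ℕ) :
    (fun k => brenMT (upr ξ) (brenMT Nat.succ (σ k))) = (fun k => brenMT Nat.succ (brenMT ξ (σ k))) :=
  funext fun k => by simp only [brenMT_comp]; rfl

mutual
theorem blsubT_renL : ∀ (t : BTm) (σ : ℕ → BTm) (ζ), blsubT σ (brenLT ζ t) = blsubT (fun k => σ (ζ k)) t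
  | .var x, _, _ => rfl
  | .abs t, σ, ζ => by simp only [brenLT, blsubT, blsubT_renL t, bupsL_upr]
  | .mabs c, σ, ζ => by simp only [brenLT, blsubT, blsubC_renL c]
theorem blsubC_renL : ∀ (c : BCm) (σ : ℕ → BTm) (ζ), blsubC σ (brenLC ζ c) = blsubC (fun k => σ (ζ k)) c
  | .cut t e, σ, ζ => by simp only [brenLC, blsubC, blsubT_renL t, blsubE_renL e]
theorem blsubE_renL : ∀ (e : BCt) (σ : ℕ → BTm) (ζ), blsubE σ (brenLE ζ e) = blsubE (fun k => σ (ζ k)) e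
  | .cvar a, _, _ => rfl
  | .cons t e, σ, ζ => by simp only [brenLE, blsubE, blsubT_renL t, blsubE_renL e]
  | .tmu c, σ, ζ => by simp only [brenLE, blsubE, blsubC_renL c, bupsL_upr]
end

mutual
theorem renL_blsubT : ∀ (t : BTm) (σ : ℕ → BTm) (ξ), brenLT ξ (blsubT σ t) = blsubT (fun k => brenLT ξ (σ k)) t
  | .var x, _, _ => rfl
  | .abs t, σ, ξ => by simp only [blsubT, brenLT, renL_blsubT t, renL_bupsL]
  | .mabs c, σ, ξ => by simp only [blsubT, brenLT, renL_blsubC c, renLM_comm_sub]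
theorem renL_blsubC : ∀ (c : BCm) (σ : ℕ → BTm) (ξ), brenLC ξ (blsubC σ c) = blsubC (fun k => brenLT ξ (σ k)) c
  | .cut t e, σ, ξ => by simp only [blsubC, brenLC, renL_blsubT t, renL_blsubE e]
theorem renL_blsubE : ∀ (e : BCt) (σ : ℕ → BTm) (ξ), brenLE ξ (blsubE σ e) = blsubE (fun k => brenLT ξ (σ k)) e
  | .cvar a, _, _ => rfl
  | .cons t e, σ, ξ => by simp only [blsubE, brenLE, renL_blsubT t, renL_blsubE e]
  | .tmu c, σ, ξ => by simp only [blsubE, brenLE, renL_blsubC c, renL_bupsL]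
end

mutual
theorem renM_blsubT : ∀ (t : BTm) (σ : ℕ → BTm) (ξ), brenMT ξ (blsubT σ t) = blsubT (fun k => brenMT ξ (σ k)) (brenMT ξ t)
  | .var x, _, _ => rfl
  | .abs t, σ, ξ => by simp only [blsubT, brenMT, renM_blsubT t, renM_bupsL]
  | .mabs c, σ, ξ => by simp only [blsubT, brenMT, renM_blsubC c, renMM_sub]
theorem renM_blsubC : ∀ (c : BCm) (σ : ℕ → BTm) (ξ), brenMC ξ (blsubC σ c) = blsubC (fun k => brenMT ξ (σ k)) (brenMC ξ c)
  | .cut t e, σ, ξ => by simp only [blsubC, brenMC, renM_blsubT t, renM_blsubE e]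
theorem renM_blsubE : ∀ (e : BCt) (σ : ℕ → BTm) (ξ), brenME ξ (blsubE σ e) = blsubE (fun k => brenMT ξ (σ k)) (brenME ξ e)
  | .cvar a, _, _ => rfl
  | .cons t e, σ, ξ => by simp only [blsubE, brenME, renM_blsubT t, renM_blsubE e]
  | .tmu c, σ, ξ => by simp only [blsubE, brenME, renM_blsubC c, renM_bupsL]
end

mutual
theorem blsubT_id : ∀ (t : BTm) (σ : ℕ → BTm), (∀ k, σ k = .var k) → blsubT σ t = t
  | .var x, σ, h => h x
  | .abs t, σ, h => by
      simp only [blsubT]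
      rw [blsubT_id t]
      intro k; cases k with
      | zero => rfl
      | succ k => simp only [bupsL, h k]; rfl
  | .mabs c, σ, h => by
      simp only [blsubT]
      rw [blsubC_id c]
      intro k; rw [h k]; rfl
theorem blsubC_id : ∀ (c : BCm) (σ : ℕ → BTm), (∀ k, σ k = .var k) → blsubC σ c = c
  | .cut t e, σ, h => by simp only [blsubC]; rw [blsubT_id t _ h, blsubE_id e _ h]
theorem blsubE_id : ∀ (e : BCt) (σ : ℕ → BTm), (∀ k, σ k = .var k) → blsubE σ e = e
  | .cvar a, _, _ => rfl
  | .cons t e, σ, h => by simp only [blsubE]; rw [blsubT_id t _ h, blsubE_id e _ h]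
  | .tmu c, σ, h => by
      simp only [blsubE]
      rw [blsubC_id c]
      intro k; cases k with
      | zero => rfl
      | succ k => simp only [bupsL, h k]; rfl
end
theorem bupsM_upr (σ : ℕ → BCt) (ζ : ℕ → ℕ) :
    (fun k => bupsM σ (upr ζ k)) = bupsM (fun k => σ (ζ k)) :=
  funext fun k => by cases k <;> rfl

theorem renM_bupsM (σ : ℕ → BCt) (ξ : ℕ → ℕ) :
    (fun k => brenME (upr ξ) (bupsM σ k)) = bupsM (fun k => brenME ξ (σ k)) :=
  funext fun k => by
    cases k with
    | zero => rfl
    | succ k => simp only [bupsM, brenME_comp]; rfl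

theorem renL_bupsM (σ : ℕ → BCt) (ξ : ℕ → ℕ) :
    (fun k => brenLE ξ (bupsM σ k)) = bupsM (fun k => brenLE ξ (σ k)) :=
  funext fun k => by
    cases k with
    | zero => rfl
    | succ k => simp only [bupsM]; exact brenLM_E (σ k) ξ Nat.succ

theorem renLL_subE (σ : ℕ → BCt) (ξ : ℕ → ℕ) :
    (fun k => brenLE (upr ξ) (brenLE Nat.succ (σ k))) = (fun k => brenLE Nat.succ (brenLE ξ (σ k))) :=
  funext fun k => by simp only [brenLE_comp]; rfl

theorem renML_subE (σ : ℕ → BCt) (ξ : ℕ → ℕ) :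
    (fun k => brenME ξ (brenLE Nat.succ (σ k))) = (fun k => brenLE Nat.succ (brenME ξ (σ k))) :=
  funext fun k => (brenLM_E (σ k) Nat.succ ξ).symm

mutual
theorem bmsubT_renM : ∀ (t : BTm) (σ : ℕ → BCt) (ζ), bmsubT σ (brenMT ζ t) = bmsubT (fun k => σ (ζ k)) t
  | .var x, _, _ => rfl
  | .abs t, σ, ζ => by simp only [brenMT, bmsubT, bmsubT_renM t]
  | .mabs c, σ, ζ => by simp only [brenMT, bmsubT, bmsubC_renM c, bupsM_upr]
theorem bmsubC_renM : ∀ (c : BCm) (σ : ℕ → BCt) (ζ), bmsubC σ (brenMC ζ c) = bmsubC (fun k => σ (ζ k)) c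
  | .cut t e, σ, ζ => by simp only [brenMC, bmsubC, bmsubT_renM t, bmsubE_renM e]
theorem bmsubE_renM : ∀ (e : BCt) (σ : ℕ → BCt) (ζ), bmsubE σ (brenME ζ e) = bmsubE (fun k => σ (ζ k)) e
  | .cvar a, _, _ => rfl
  | .cons t e, σ, ζ => by simp only [brenME, bmsubE, bmsubT_renM t, bmsubE_renM e]
  | .tmu c, σ, ζ => by simp only [brenME, bmsubE, bmsubC_renM c]
end

mutual
theorem renM_bmsubT : ∀ (t : BTm) (σ : ℕ → BCt) (ξ), brenMT ξ (bmsubT σ t) = bmsubT (fun k => brenME ξ (σ k)) t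
  | .var x, _, _ => rfl
  | .abs t, σ, ξ => by simp only [bmsubT, brenMT, renM_bmsubT t, renML_subE]
  | .mabs c, σ, ξ => by simp only [bmsubT, brenMT, renM_bmsubC c, renM_bupsM]
theorem renM_bmsubC : ∀ (c : BCm) (σ : ℕ → BCt) (ξ), brenMC ξ (bmsubC σ c) = bmsubC (fun k => brenME ξ (σ k)) c
  | .cut t e, σ, ξ => by simp only [bmsubC, brenMC, renM_bmsubT t, renM_bmsubE e]
theorem renM_bmsubE : ∀ (e : BCt) (σ : ℕ → BCt) (ξ), brenME ξ (bmsubE σ e) = bmsubE (fun k => brenME ξ (σ k)) e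
  | .cvar a, _, _ => rfl
  | .cons t e, σ, ξ => by simp only [bmsubE, brenME, renM_bmsubT t, renM_bmsubE e]
  | .tmu c, σ, ξ => by simp only [bmsubE, brenME, renM_bmsubC c, renML_subE]
end

mutual
theorem renL_bmsubT : ∀ (t : BTm) (σ : ℕ → BCt) (ξ), brenLT ξ (bmsubT σ t) = bmsubT (fun k => brenLE ξ (σ k)) (brenLT ξ t)
  | .var x, _, _ => rfl
  | .abs t, σ, ξ => by simp only [bmsubT, brenLT, renL_bmsubT t, renLL_subE]
  | .mabs c, σ, ξ => by simp only [bmsubT, brenLT, renL_bmsubC c, renL_bupsM]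
theorem renL_bmsubC : ∀ (c : BCm) (σ : ℕ → BCt) (ξ), brenLC ξ (bmsubC σ c) = bmsubC (fun k => brenLE ξ (σ k)) (brenLC ξ c)
  | .cut t e, σ, ξ => by simp only [bmsubC, brenLC, renL_bmsubT t, renL_bmsubE e]
theorem renL_bmsubE : ∀ (e : BCt) (σ : ℕ → BCt) (ξ), brenLE ξ (bmsubE σ e) = bmsubE (fun k => brenLE ξ (σ k)) (brenLE ξ e)
  | .cvar a, _, _ => rfl
  | .cons t e, σ, ξ => by simp only [bmsubE, brenLE, renL_bmsubT t, renL_bmsubE e]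
  | .tmu c, σ, ξ => by simp only [bmsubE, brenLE, renL_bmsubC c, renLL_subE]
end

mutual
theorem bmsubT_id : ∀ (t : BTm) (σ : ℕ → BCt), (∀ k, σ k = .cvar k) → bmsubT σ t = t
  | .var x, _, _ => rfl
  | .abs t, σ, h => by
      simp only [bmsubT]
      rw [bmsubT_id t]
      intro k; rw [h k]; rfl
  | .mabs c, σ, h => by
      simp only [bmsubT]
      rw [bmsubC_id c]
      intro k; cases k with
      | zero => rfl
      | succ k => simp only [bupsM, h k]; rfl
theorem bmsubC_id : ∀ (c : BCm) (σ : ℕ → BCt), (∀ k, σ k = .cvar k) → bmsubC σ c = c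
  | .cut t e, σ, h => by simp only [bmsubC]; rw [bmsubT_id t _ h, bmsubE_id e _ h]
theorem bmsubE_id : ∀ (e : BCt) (σ : ℕ → BCt), (∀ k, σ k = .cvar k) → bmsubE σ e = e
  | .cvar a, σ, h => h a
  | .cons t e, σ, h => by simp only [bmsubE]; rw [bmsubT_id t _ h, bmsubE_id e _ h]
  | .tmu c, σ, h => by
      simp only [bmsubE]
      rw [bmsubC_id c]
      intro k; rw [h k]; rfl
end
mutual
theorem bcntL_renL : ∀ (t : BTm) (ξ : ℕ → ℕ) (x), Function.Injective ξ → bcntLT (ξ x) (brenLT ξ t) = bcntLT x t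
  | .var y, ξ, x, h => by
      simp only [brenLT, bcntLT]
      by_cases hy : y = x
      · subst hy; simp
      · rw [if_neg hy, if_neg (fun hc => hy (h hc))]
  | .abs t, ξ, x, h => by
      simpa only [brenLT, bcntLT, upr] using bcntL_renL t (upr ξ) (x+1) (upr_inj h)
  | .mabs c, ξ, x, h => by simpa only [brenLT, bcntLT] using bcntL_renC c ξ x h
theorem bcntL_renC : ∀ (c : BCm) (ξ : ℕ → ℕ) (x), Function.Injective ξ → bcntLC (ξ x) (brenLC ξ c) = bcntLC x c
  | .cut t e, ξ, x, h => by
      simp only [brenLC, bcntLC, bcntL_renL t ξ x h, bcntL_renE e ξ x h]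
theorem bcntL_renE : ∀ (e : BCt) (ξ : ℕ → ℕ) (x), Function.Injective ξ → bcntLE (ξ x) (brenLE ξ e) = bcntLE x e
  | .cvar a, _, _, _ => rfl
  | .cons t e, ξ, x, h => by
      simp only [brenLE, bcntLE, bcntL_renL t ξ x h, bcntL_renE e ξ x h]
  | .tmu c, ξ, x, h => by
      simpa only [brenLE, bcntLE, upr] using bcntL_renC c (upr ξ) (x+1) (upr_inj h)
end

mutual
theorem bcntM_renM : ∀ (e : BTm) (ξ : ℕ → ℕ) (a), Function.Injective ξ → bcntMT (ξ a) (brenMT ξ e) = bcntMT a e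
  | .var y, _, _, _ => rfl
  | .abs t, ξ, a, h => by simpa only [brenMT, bcntMT] using bcntM_renM t ξ a h
  | .mabs c, ξ, a, h => by
      simpa only [brenMT, bcntMT, upr] using bcntM_renMC c (upr ξ) (a+1) (upr_inj h)
theorem bcntM_renMC : ∀ (c : BCm) (ξ : ℕ → ℕ) (a), Function.Injective ξ → bcntMC (ξ a) (brenMC ξ c) = bcntMC a c
  | .cut t e, ξ, a, h => by
      simp only [brenMC, bcntMC, bcntM_renM t ξ a h, bcntM_renME e ξ a h]
theorem bcntM_renME : ∀ (e : BCt) (ξ : ℕ → ℕ) (a), Function.Injective ξ → bcntME (ξ a) (brenME ξ e) = bcntME a e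
  | .cvar b, ξ, a, h => by
      simp only [brenME, bcntME]
      by_cases hb : b = a
      · subst hb; simp
      · rw [if_neg hb, if_neg (fun hc => hb (h hc))]
  | .cons t e, ξ, a, h => by
      simp only [brenME, bcntME, bcntM_renM t ξ a h, bcntM_renME e ξ a h]
  | .tmu c, ξ, a, h => by simpa only [brenME, bcntME] using bcntM_renMC c ξ a h
end

mutual
theorem bcntL_renMT : ∀ (t : BTm) (ξ : ℕ → ℕ) (x), bcntLT x (brenMT ξ t) = bcntLT x t
  | .var y, _, _ => rfl
  | .abs t, ξ, x => by simp only [brenMT, bcntLT, bcntL_renMT t]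
  | .mabs c, ξ, x => by simp only [brenMT, bcntLT, bcntL_renMC c]
theorem bcntL_renMC : ∀ (c : BCm) (ξ : ℕ → ℕ) (x), bcntLC x (brenMC ξ c) = bcntLC x c
  | .cut t e, ξ, x => by simp only [brenMC, bcntLC, bcntL_renMT t, bcntL_renME e]
theorem bcntL_renME : ∀ (e : BCt) (ξ : ℕ → ℕ) (x), bcntLE x (brenME ξ e) = bcntLE x e
  | .cvar a, _, _ => rfl
  | .cons t e, ξ, x => by simp only [brenME, bcntLE, bcntL_renMT t, bcntL_renME e]
  | .tmu c, ξ, x => by simp only [brenME, bcntLE, bcntL_renMC c]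
end

mutual
theorem bcntM_renLT : ∀ (t : BTm) (ξ : ℕ → ℕ) (a), bcntMT a (brenLT ξ t) = bcntMT a t
  | .var y, _, _ => rfl
  | .abs t, ξ, a => by simp only [brenLT, bcntMT, bcntM_renLT t]
  | .mabs c, ξ, a => by simp only [brenLT, bcntMT, bcntM_renLC c]
theorem bcntM_renLC : ∀ (c : BCm) (ξ : ℕ → ℕ) (a), bcntMC a (brenLC ξ c) = bcntMC a c
  | .cut t e, ξ, a => by simp only [brenLC, bcntMC, bcntM_renLT t, bcntM_renLE e]
theorem bcntM_renLE : ∀ (e : BCt) (ξ : ℕ → ℕ) (a), bcntME a (brenLE ξ e) = bcntME a e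
  | .cvar b, _, _ => rfl
  | .cons t e, ξ, a => by simp only [brenLE, bcntME, bcntM_renLT t, bcntM_renLE e]
  | .tmu c, ξ, a => by simp only [brenLE, bcntME, bcntM_renLC c]
end

theorem upr_ne_succ {ξ : ℕ → ℕ} {x : ℕ} (h : ∀ y, ξ y ≠ x) : ∀ y, upr ξ y ≠ x + 1 := fun y => by
  cases y with
  | zero => simp [upr]
  | succ y => simp only [upr]; exact fun hc => h y (Nat.succ_injective hc)

mutual
theorem bcntL_notin : ∀ (t : BTm) (ξ : ℕ → ℕ) (x), (∀ y, ξ y ≠ x) → bcntLT x (brenLT ξ t) = 0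
  | .var y, ξ, x, h => by simp only [brenLT, bcntLT, if_neg (h y)]
  | .abs t, ξ, x, h => by
      simp only [brenLT, bcntLT]
      exact bcntL_notin t (upr ξ) (x+1) (upr_ne_succ h)
  | .mabs c, ξ, x, h => by simpa only [brenLT, bcntLT] using bcntL_notinC c ξ x h
theorem bcntL_notinC : ∀ (c : BCm) (ξ : ℕ → ℕ) (x), (∀ y, ξ y ≠ x) → bcntLC x (brenLC ξ c) = 0
  | .cut t e, ξ, x, h => by
      simp only [brenLC, bcntLC, bcntL_notin t ξ x h, bcntL_notinE e ξ x h]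
theorem bcntL_notinE : ∀ (e : BCt) (ξ : ℕ → ℕ) (x), (∀ y, ξ y ≠ x) → bcntLE x (brenLE ξ e) = 0
  | .cvar a, _, _, _ => rfl
  | .cons t e, ξ, x, h => by
      simp only [brenLE, bcntLE, bcntL_notin t ξ x h, bcntL_notinE e ξ x h]
  | .tmu c, ξ, x, h => by
      simp only [brenLE, bcntLE]
      exact bcntL_notinC c (upr ξ) (x+1) (upr_ne_succ h)
end

mutual
theorem bcntM_notin : ∀ (t : BTm) (ξ : ℕ → ℕ) (a), (∀ y, ξ y ≠ a) → bcntMT a (brenMT ξ t) = 0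
  | .var y, _, _, _ => rfl
  | .abs t, ξ, a, h => by simpa only [brenMT, bcntMT] using bcntM_notin t ξ a h
  | .mabs c, ξ, a, h => by
      simp only [brenMT, bcntMT]
      exact bcntM_notinC c (upr ξ) (a+1) (upr_ne_succ h)
theorem bcntM_notinC : ∀ (c : BCm) (ξ : ℕ → ℕ) (a), (∀ y, ξ y ≠ a) → bcntMC a (brenMC ξ c) = 0
  | .cut t e, ξ, a, h => by
      simp only [brenMC, bcntMC, bcntM_notin t ξ a h, bcntM_notinE e ξ a h]
theorem bcntM_notinE : ∀ (e : BCt) (ξ : ℕ → ℕ) (a), (∀ y, ξ y ≠ a) → bcntME a (brenME ξ e) = 0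
  | .cvar b, ξ, a, h => by simp only [brenME, bcntME, if_neg (h b)]
  | .cons t e, ξ, a, h => by
      simp only [brenME, bcntME, bcntM_notin t ξ a h, bcntM_notinE e ξ a h]
  | .tmu c, ξ, a, h => by simpa only [brenME, bcntME] using bcntM_notinC c ξ a h
end

theorem IsStk_renL {s : BCt} (h : IsStk s) (ξ : ℕ → ℕ) : IsStk (brenLE ξ s) := by
  induction h with
  | cvar a => simp only [brenLE]; exact .cvar a
  | cons t _ ih => simp only [brenLE]; exact .cons _ ih

theorem IsStk_renM {s : BCt} (h : IsStk s) (ξ : ℕ → ℕ) : IsStk (brenME ξ s) := by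
  induction h with
  | cvar a => simp only [brenME]; exact .cvar _
  | cons t _ ih => simp only [brenME]; exact .cons _ ih

/-- λμ-contexts that are "stacks" (no `push`). -/
inductive EStk : Ct → Prop
  | cvar (a : ℕ) : EStk (.cvar a)
  | cons {e : Ct} (t : Tm) : EStk e → EStk (.cons e t)

theorem EStk_renLE {e : Ct} (h : EStk e) (ξ : ℕ → ℕ) : EStk (renLE ξ e) := by
  induction h with
  | cvar a => simp only [renLE]; exact .cvar a
  | cons t _ ih => simp only [renLE]; exact .cons _ ih

theorem EStk_renME {e : Ct} (h : EStk e) (ξ : ℕ → ℕ) : EStk (renME ξ e) := by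
  induction h with
  | cvar a => simp only [renME]; exact .cvar _
  | cons t _ ih => simp only [renME]; exact .cons _ ih
theorem upr_succ_comp (ξ : ℕ → ℕ) : (fun k => upr ξ (Nat.succ k)) = (fun k => Nat.succ (ξ k)) := rfl

theorem BRootT_renL {t t' : BTm} (ξ : ℕ → ℕ) (h : BRootT t t') : BRootT (brenLT ξ t) (brenLT ξ t') := by
  cases h with
  | theta t =>
    simp only [brenLT, brenLC, brenLE, brenLM_T]
    exact .theta _
theorem BRootT_renM {t t' : BTm} (ξ : ℕ → ℕ) (h : BRootT t t') : BRootT (brenMT ξ t) (brenMT ξ t') := by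
  cases h with
  | theta s =>
    simp only [brenMT, brenMC, brenME, brenMT_comp, upr_succ_comp, upr]
    rw [← brenMT_comp t' Nat.succ ξ]
    exact .theta _

theorem sub0M_renL (s : BCt) (ξ : ℕ → ℕ) :
    (fun k => brenLE ξ (bsub0M s k)) = bsub0M (brenLE ξ s) :=
  funext fun k => by cases k <;> rfl
theorem sub0L_renL (t : BTm) (ξ : ℕ → ℕ) :
    (fun k => brenLT ξ (bsub0L t k)) = (fun k => bsub0L (brenLT ξ t) (upr ξ k)) :=
  funext fun k => by cases k <;> rfl
theorem sub0M_renM (s : BCt) (ξ : ℕ → ℕ) :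
    (fun k => brenME ξ (bsub0M s k)) = (fun k => bsub0M (brenME ξ s) (upr ξ k)) :=
  funext fun k => by cases k <;> rfl
theorem sub0L_renM (t : BTm) (ξ : ℕ → ℕ) :
    (fun k => brenMT ξ (bsub0L t k)) = bsub0L (brenMT ξ t) :=
  funext fun k => by cases k <;> rfl

theorem BRootCn_renL {c c' : BCm} (ξ : ℕ → ℕ) (h : BRootCn c c') : BRootCn (brenLC ξ c) (brenLC ξ c') := by
  cases h with
  | beta u t e =>
    simp only [brenLC, brenLT, brenLE, brenLE_comp, upr_succ_comp]
    rw [← brenLE_comp e Nat.succ ξ]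
    exact .beta _ _ _
  | mun c s hs =>
    simp only [brenLC, brenLT]
    rw [renL_bmsubC, sub0M_renL]
    exact .mun _ _ (IsStk_renL hs ξ)
  | mutilde t c =>
    simp only [brenLC, brenLT, brenLE]
    rw [renL_blsubC, sub0L_renL, ← blsubC_renL c (bsub0L (brenLT ξ t)) (upr ξ)]
    exact .mutilde _ _

theorem BRootCn_renM {c c' : BCm} (ξ : ℕ → ℕ) (h : BRootCn c c') : BRootCn (brenMC ξ c) (brenMC ξ c') := by
  cases h with
  | beta u t e =>
    simp only [brenMC, brenMT, brenME]
    rw [← brenLM_E]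
    exact .beta _ _ _
  | mun c s hs =>
    simp only [brenMC, brenMT]
    rw [renM_bmsubC, sub0M_renM, ← bmsubC_renM c (bsub0M (brenME ξ s)) (upr ξ)]
    exact .mun _ _ (IsStk_renM hs ξ)
  | mutilde t c =>
    simp only [brenMC, brenMT, brenME]
    rw [renM_blsubC, sub0L_renM]
    exact .mutilde _ _

theorem BRootCnlin_renL {c c' : BCm} (ξ : ℕ → ℕ) (hξ : Function.Injective ξ)
    (h : BRootCnlin c c') : BRootCnlin (brenLC ξ c) (brenLC ξ c') := by
  cases h with
  | beta u t e =>
    simp only [brenLC, brenLT, brenLE, brenLE_comp, upr_succ_comp]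
    rw [← brenLE_comp e Nat.succ ξ]
    exact .beta _ _ _
  | mun c s hs hlin =>
    simp only [brenLC, brenLT]
    rw [renL_bmsubC, sub0M_renL]
    refine .mun _ _ (IsStk_renL hs ξ) ?_
    rcases hlin with ⟨a, rfl⟩ | hcnt
    · exact Or.inl ⟨a, rfl⟩
    · exact Or.inr (by rw [bcntM_renLC]; exact hcnt)
  | mutilde t c hlin =>
    simp only [brenLC, brenLT, brenLE]
    rw [renL_blsubC, sub0L_renL, ← blsubC_renL c (bsub0L (brenLT ξ t)) (upr ξ)]
    refine .mutilde _ _ ?_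
    rcases hlin with ⟨x, rfl⟩ | hcnt
    · exact Or.inl ⟨ξ x, rfl⟩
    · exact Or.inr (by
        have := bcntL_renC c (upr ξ) 0 (upr_inj hξ)
        simpa [upr] using this.trans hcnt)

theorem BRootCnlin_renM {c c' : BCm} (ξ : ℕ → ℕ) (hξ : Function.Injective ξ)
    (h : BRootCnlin c c') : BRootCnlin (brenMC ξ c) (brenMC ξ c') := by
  cases h with
  | beta u t e =>
    simp only [brenMC, brenMT, brenME]
    rw [← brenLM_E]
    exact .beta _ _ _
  | mun c s hs hlin =>
    simp only [brenMC, brenMT]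
    rw [renM_bmsubC, sub0M_renM, ← bmsubC_renM c (bsub0M (brenME ξ s)) (upr ξ)]
    refine .mun _ _ (IsStk_renM hs ξ) ?_
    rcases hlin with ⟨a, rfl⟩ | hcnt
    · exact Or.inl ⟨ξ a, rfl⟩
    · exact Or.inr (by
        have := bcntM_renMC c (upr ξ) 0 (upr_inj hξ)
        simpa [upr] using this.trans hcnt)
  | mutilde t c hlin =>
    simp only [brenMC, brenMT, brenME]
    rw [renM_blsubC, sub0L_renM]
    refine .mutilde _ _ ?_
    rcases hlin with ⟨x, rfl⟩ | hcnt
    · exact Or.inl ⟨x, rfl⟩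
    · exact Or.inr (by rw [bcntL_renMC]; exact hcnt)

mutual
theorem JT_renL {R1 : BTm → BTm → Prop} {R2 : BCm → BCm → Prop}
    (h1 : ∀ (ξ : ℕ → ℕ), Function.Injective ξ → ∀ {t t' : BTm}, R1 t t' → R1 (brenLT ξ t) (brenLT ξ t'))
    (h2 : ∀ (ξ : ℕ → ℕ), Function.Injective ξ → ∀ {c c' : BCm}, R2 c c' → R2 (brenLC ξ c) (brenLC ξ c')) :
    ∀ {t t'} (ξ : ℕ → ℕ), Function.Injective ξ → JT R1 R2 t t' → JT R1 R2 (brenLT ξ t) (brenLT ξ t')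
  | _, _, ξ, hξ, .root h => .root (h1 ξ hξ h)
  | _, _, ξ, hξ, .absC h => by
      simp only [brenLT]; exact .absC (JT_renL h1 h2 (upr ξ) (upr_inj hξ) h)
  | _, _, ξ, hξ, .mabsC h => by
      simp only [brenLT]; exact .mabsC (JC_renL h1 h2 ξ hξ h)
theorem JC_renL {R1 : BTm → BTm → Prop} {R2 : BCm → BCm → Prop}
    (h1 : ∀ (ξ : ℕ → ℕ), Function.Injective ξ → ∀ {t t' : BTm}, R1 t t' → R1 (brenLT ξ t) (brenLT ξ t'))
    (h2 : ∀ (ξ : ℕ → ℕ), Function.Injective ξ → ∀ {c c' : BCm}, R2 c c' → R2 (brenLC ξ c) (brenLC ξ c')) :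
    ∀ {c c'} (ξ : ℕ → ℕ), Function.Injective ξ → JC R1 R2 c c' → JC R1 R2 (brenLC ξ c) (brenLC ξ c')
  | _, _, ξ, hξ, .root h => .root (h2 ξ hξ h)
  | _, _, ξ, hξ, .cutL e h => by
      simp only [brenLC]; exact .cutL _ (JT_renL h1 h2 ξ hξ h)
  | _, _, ξ, hξ, .cutR t h => by
      simp only [brenLC]; exact .cutR _ (JE_renL h1 h2 ξ hξ h)
theorem JE_renL {R1 : BTm → BTm → Prop} {R2 : BCm → BCm → Prop}
    (h1 : ∀ (ξ : ℕ → ℕ), Function.Injective ξ → ∀ {t t' : BTm}, R1 t t' → R1 (brenLT ξ t) (brenLT ξ t'))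
    (h2 : ∀ (ξ : ℕ → ℕ), Function.Injective ξ → ∀ {c c' : BCm}, R2 c c' → R2 (brenLC ξ c) (brenLC ξ c')) :
    ∀ {e e'} (ξ : ℕ → ℕ), Function.Injective ξ → JE R1 R2 e e' → JE R1 R2 (brenLE ξ e) (brenLE ξ e')
  | _, _, ξ, hξ, .consL e h => by
      simp only [brenLE]; exact .consL _ (JT_renL h1 h2 ξ hξ h)
  | _, _, ξ, hξ, .consR t h => by
      simp only [brenLE]; exact .consR _ (JE_renL h1 h2 ξ hξ h)
  | _, _, ξ, hξ, .tmuC h => by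
      simp only [brenLE]; exact .tmuC (JC_renL h1 h2 (upr ξ) (upr_inj hξ) h)
end

mutual
theorem JT_renM {R1 : BTm → BTm → Prop} {R2 : BCm → BCm → Prop}
    (h1 : ∀ (ξ : ℕ → ℕ), Function.Injective ξ → ∀ {t t' : BTm}, R1 t t' → R1 (brenMT ξ t) (brenMT ξ t'))
    (h2 : ∀ (ξ : ℕ → ℕ), Function.Injective ξ → ∀ {c c' : BCm}, R2 c c' → R2 (brenMC ξ c) (brenMC ξ c')) :
    ∀ {t t'} (ξ : ℕ → ℕ), Function.Injective ξ → JT R1 R2 t t' → JT R1 R2 (brenMT ξ t) (brenMT ξ t')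
  | _, _, ξ, hξ, .root h => .root (h1 ξ hξ h)
  | _, _, ξ, hξ, .absC h => by
      simp only [brenMT]; exact .absC (JT_renM h1 h2 ξ hξ h)
  | _, _, ξ, hξ, .mabsC h => by
      simp only [brenMT]; exact .mabsC (JC_renM h1 h2 (upr ξ) (upr_inj hξ) h)
theorem JC_renM {R1 : BTm → BTm → Prop} {R2 : BCm → BCm → Prop}
    (h1 : ∀ (ξ : ℕ → ℕ), Function.Injective ξ → ∀ {t t' : BTm}, R1 t t' → R1 (brenMT ξ t) (brenMT ξ t'))
    (h2 : ∀ (ξ : ℕ → ℕ), Function.Injective ξ → ∀ {c c' : BCm}, R2 c c' → R2 (brenMC ξ c) (brenMC ξ c')) :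
    ∀ {c c'} (ξ : ℕ → ℕ), Function.Injective ξ → JC R1 R2 c c' → JC R1 R2 (brenMC ξ c) (brenMC ξ c')
  | _, _, ξ, hξ, .root h => .root (h2 ξ hξ h)
  | _, _, ξ, hξ, .cutL e h => by
      simp only [brenMC]; exact .cutL _ (JT_renM h1 h2 ξ hξ h)
  | _, _, ξ, hξ, .cutR t h => by
      simp only [brenMC]; exact .cutR _ (JE_renM h1 h2 ξ hξ h)
theorem JE_renM {R1 : BTm → BTm → Prop} {R2 : BCm → BCm → Prop}
    (h1 : ∀ (ξ : ℕ → ℕ), Function.Injective ξ → ∀ {t t' : BTm}, R1 t t' → R1 (brenMT ξ t) (brenMT ξ t'))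
    (h2 : ∀ (ξ : ℕ → ℕ), Function.Injective ξ → ∀ {c c' : BCm}, R2 c c' → R2 (brenMC ξ c) (brenMC ξ c')) :
    ∀ {e e'} (ξ : ℕ → ℕ), Function.Injective ξ → JE R1 R2 e e' → JE R1 R2 (brenME ξ e) (brenME ξ e')
  | _, _, ξ, hξ, .consL e h => by
      simp only [brenME]; exact .consL _ (JT_renM h1 h2 ξ hξ h)
  | _, _, ξ, hξ, .consR t h => by
      simp only [brenME]; exact .consR _ (JE_renM h1 h2 ξ hξ h)
  | _, _, ξ, hξ, .tmuC h => by
      simp only [brenME]; exact .tmuC (JC_renM h1 h2 ξ hξ h)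
end

theorem BStepNT_renL {t t' : BTm} (ξ : ℕ → ℕ) (hξ : Function.Injective ξ) (h : BStepNT t t') :
    BStepNT (brenLT ξ t) (brenLT ξ t') :=
  JT_renL (fun ξ _ {_ _} h => BRootT_renL ξ h) (fun ξ _ {_ _} h => BRootCn_renL ξ h) ξ hξ h
theorem BStepNT_renM {t t' : BTm} (ξ : ℕ → ℕ) (hξ : Function.Injective ξ) (h : BStepNT t t') :
    BStepNT (brenMT ξ t) (brenMT ξ t') :=
  JT_renM (fun ξ _ {_ _} h => BRootT_renM ξ h) (fun ξ _ {_ _} h => BRootCn_renM ξ h) ξ hξ h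
theorem LBStepNT_renL {t t' : BTm} (ξ : ℕ → ℕ) (hξ : Function.Injective ξ) (h : LBStepNT t t') :
    LBStepNT (brenLT ξ t) (brenLT ξ t') :=
  JT_renL (fun ξ _ {_ _} h => BRootT_renL ξ h) (fun ξ hξ {_ _} h => BRootCnlin_renL ξ hξ h) ξ hξ h
theorem LBStepNT_renM {t t' : BTm} (ξ : ℕ → ℕ) (hξ : Function.Injective ξ) (h : LBStepNT t t') :
    LBStepNT (brenMT ξ t) (brenMT ξ t') :=
  JT_renM (fun ξ _ {_ _} h => BRootT_renM ξ h) (fun ξ hξ {_ _} h => BRootCnlin_renM ξ hξ h) ξ hξ h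
mutual
theorem dag_renL : ∀ (t : Tm) (ξ : ℕ → ℕ), dagT (renLT ξ t) = brenLT ξ (dagT t)
  | .var x, ξ => rfl
  | .abs t, ξ => by simp only [renLT, dagT, brenLT, dag_renL t]
  | .app u v, ξ => by
      simp only [renLT, dagT, brenLT, brenLC, brenLE, dag_renL u, dag_renL v, brenLM_T, brenLT_comp,
        upr_succ_comp, upr]
  | .mabs c, ξ => by simp only [renLT, dagT, brenLT, dag_renLC c]
theorem dag_renLC : ∀ (c : Cm) (ξ : ℕ → ℕ), dagC (renLC ξ c) = brenLC ξ (dagC c)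
  | .cmd a t, ξ => by simp only [renLC, dagC, brenLC, brenLE, dag_renL t]
end

mutual
theorem dag_renM : ∀ (t : Tm) (ξ : ℕ → ℕ), dagT (renMT ξ t) = brenMT ξ (dagT t)
  | .var x, ξ => rfl
  | .abs t, ξ => by simp only [renMT, dagT, brenMT, dag_renM t]
  | .app u v, ξ => by
      simp only [renMT, dagT, brenMT, brenMC, brenME, dag_renM u, dag_renM v, brenLM_T,
        brenMT_comp, upr_succ_comp, upr]
  | .mabs c, ξ => by simp only [renMT, dagT, brenMT, dag_renMC c]
theorem dag_renMC : ∀ (c : Cm) (ξ : ℕ → ℕ), dagC (renMC ξ c) = brenMC ξ (dagC c)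
  | .cmd a t, ξ => by simp only [renMC, dagC, brenMC, brenME, dag_renM t]
end

theorem dagE_renL (e : Ct) (ξ : ℕ → ℕ) : dagE (renLE ξ e) = brenLE ξ (dagE e) := by
  induction e with
  | cvar a => rfl
  | push b t =>
      simp only [renLE, dagE, brenLE, brenLC, brenLT, dag_renL, brenLT_comp, upr_succ_comp, upr]
  | cons e t ih => simp only [renLE, dagE, brenLE, dag_renL, ih]

theorem dagE_renM (e : Ct) (ξ : ℕ → ℕ) : dagE (renME ξ e) = brenME ξ (dagE e) := by
  induction e with
  | cvar a => rfl
  | push b t =>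
      simp only [renME, dagE, brenME, brenMC, brenMT, dag_renM, brenLM_T]
  | cons e t ih => simp only [renME, dagE, brenME, dag_renM, ih]

theorem dag_upsL (σ : ℕ → Tm) :
    (fun k => dagT (upsL σ k)) = bupsL (fun k => dagT (σ k)) :=
  funext fun k => by cases k with
    | zero => rfl
    | succ k => simp only [upsL, bupsL, dag_renL]

mutual
theorem dag_lsub : ∀ (t : Tm) (σ : ℕ → Tm), dagT (lsubT σ t) = blsubT (fun k => dagT (σ k)) (dagT t)
  | .var x, σ => rfl
  | .abs t, σ => by simp only [lsubT, dagT, blsubT, dag_lsub t, dag_upsL]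
  | .app u v, σ => by
      simp only [lsubT, dagT, blsubT, blsubC, blsubE, dag_lsub u, dag_lsub v, renM_blsubT,
        renL_blsubT, blsubT_renL, bupsL]
  | .mabs c, σ => by
      simp only [lsubT, dagT, blsubT, dag_lsubC c, dag_renM]
theorem dag_lsubC : ∀ (c : Cm) (σ : ℕ → Tm), dagC (lsubC σ c) = blsubC (fun k => dagT (σ k)) (dagC c)
  | .cmd a t, σ => by simp only [lsubC, dagC, blsubC, blsubE, dag_lsub t]
end

theorem star_mabsC {R1 : BTm → BTm → Prop} {R2 : BCm → BCm → Prop} {c c' : BCm}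
    (h : Star (JC R1 R2) c c') : Star (JT R1 R2) (.mabs c) (.mabs c') :=
  Relation.ReflTransGen.lift _ (fun _ _ h => JT.mabsC h) _ _ h

theorem star_cutL {R1 : BTm → BTm → Prop} {R2 : BCm → BCm → Prop} {t t' : BTm} (e : BCt)
    (h : Star (JT R1 R2) t t') : Star (JC R1 R2) (.cut t e) (.cut t' e) :=
  Relation.ReflTransGen.lift (fun x => BCm.cut x e) (fun _ _ h => JC.cutL e h) _ _ h

theorem star_absC {R1 : BTm → BTm → Prop} {R2 : BCm → BCm → Prop} {t t' : BTm}
    (h : Star (JT R1 R2) t t') : Star (JT R1 R2) (.abs t) (.abs t') :=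
  Relation.ReflTransGen.lift _ (fun _ _ h => JT.absC h) _ _ h
theorem EStk_dagE {e : Ct} (h : EStk e) : IsStk (dagE e) := by
  induction h with
  | cvar a => exact .cvar a
  | cons t _ ih => exact .cons _ ih

theorem succ_ne_zero' : ∀ y : ℕ, Nat.succ y ≠ 0 := fun y => Nat.succ_ne_zero y

/-- Key linear-reduction lemma: `(e⟨t⟩)† →lin* ⟨t† | e†⟩` for stacks `e`. -/
theorem fill_dag {e : Ct} (he : EStk e) : ∀ (t : Tm),
    Star LBStepNC (dagC (fill e t)) (.cut (dagT t) (dagE e)) := by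
  induction he with
  | cvar a => intro t; simp only [fill, dagC, dagE]; exact .refl
  | @cons e u he ih =>
    intro t
    simp only [fill]
    refine Relation.ReflTransGen.trans (ih (.app t u)) ?_
    simp only [dagT, dagE]
    set s := dagE e with hs_def
    have hs : IsStk s := EStk_dagE he
    have hcnt : bcntMC 0 (BCm.cut (brenMT Nat.succ (dagT u))
        (.tmu (.cut (brenLT Nat.succ (brenMT Nat.succ (dagT t))) (.cons (.var 0) (.cvar 0))))) = 1 := by
      simp only [bcntMC, bcntMT, bcntME, bcntM_renLT,
        bcntM_notin _ Nat.succ 0 succ_ne_zero']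
      simp
    have e1 : bmsubC (bsub0M s) (BCm.cut (brenMT Nat.succ (dagT u))
        (.tmu (.cut (brenLT Nat.succ (brenMT Nat.succ (dagT t))) (.cons (.var 0) (.cvar 0)))))
        = .cut (dagT u) (.tmu (.cut (brenLT Nat.succ (dagT t)) (.cons (.var 0) (brenLE Nat.succ s)))) := by
      simp only [bmsubC, bmsubT, bmsubE, brenLM_T, bmsubT_renM]
      rw [bmsubT_id (dagT u) (fun k => bsub0M s k.succ) (fun k => rfl),
        bmsubT_id (brenLT Nat.succ (dagT t)) (fun k => brenLE Nat.succ (bsub0M s k.succ)) (fun k => rfl)]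
      rfl
    have hcnt2 : bcntLC 0 (BCm.cut (brenLT Nat.succ (dagT t))
        (.cons (.var 0) (brenLE Nat.succ s))) = 1 := by
      simp only [bcntLC, bcntLT, bcntLE,
        bcntL_notin _ Nat.succ 0 succ_ne_zero', bcntL_notinE _ Nat.succ 0 succ_ne_zero']
      simp
    have e2 : blsubC (bsub0L (dagT u)) (BCm.cut (brenLT Nat.succ (dagT t))
        (.cons (.var 0) (brenLE Nat.succ s)))
        = .cut (dagT t) (.cons (dagT u) s) := by
      simp only [blsubC, blsubT, blsubE, blsubT_renL, blsubE_renL]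
      rw [blsubT_id (dagT t) (fun k => bsub0L (dagT u) k.succ) (fun k => rfl),
        blsubE_id s (fun k => bsub0L (dagT u) k.succ) (fun k => rfl)]
      rfl
    refine Relation.ReflTransGen.head
      (b := .cut (dagT u) (.tmu (.cut (brenLT Nat.succ (dagT t)) (.cons (.var 0) (brenLE Nat.succ s)))))
      ?_ (Relation.ReflTransGen.single ?_)
    · have h1 : LBStepNC (.cut (.mabs (BCm.cut (brenMT Nat.succ (dagT u))
          (.tmu (.cut (brenLT Nat.succ (brenMT Nat.succ (dagT t))) (.cons (.var 0) (.cvar 0)))))) s)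
          (bmsubC (bsub0M s) (BCm.cut (brenMT Nat.succ (dagT u))
          (.tmu (.cut (brenLT Nat.succ (brenMT Nat.succ (dagT t))) (.cons (.var 0) (.cvar 0)))))) :=
        JC.root (BRootCnlin.mun _ s hs (Or.inr hcnt))
      rwa [e1] at h1
    · have h2 : LBStepNC (.cut (dagT u) (.tmu (.cut (brenLT Nat.succ (dagT t))
          (.cons (.var 0) (brenLE Nat.succ s)))))
          (blsubC (bsub0L (dagT u)) (BCm.cut (brenLT Nat.succ (dagT t))
          (.cons (.var 0) (brenLE Nat.succ s)))) :=
        JC.root (BRootCnlin.mutilde _ _ (Or.inr hcnt2))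
      rwa [e2] at h2

theorem dagE_upsM (σ : ℕ → Ct) :
    (fun k => dagE (upsM σ k)) = bupsM (fun k => dagE (σ k)) :=
  funext fun k => by cases k with
    | zero => rfl
    | succ k => simp only [upsM, bupsM, dagE_renM]

theorem EStk_upsM {σ : ℕ → Ct} (hσ : ∀ k, EStk (σ k)) : ∀ k, EStk (upsM σ k) := fun k => by
  cases k with
  | zero => exact .cvar 0
  | succ k => exact EStk_renME (hσ k) _

mutual
theorem msub_dagT : ∀ (t : Tm) (σ : ℕ → Ct), (∀ k, EStk (σ k)) →
    Star LBStepNT (dagT (msubT σ t)) (bmsubT (fun k => dagE (σ k)) (dagT t))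
  | .var x, σ, hσ => by simp only [msubT, dagT, bmsubT]; exact .refl
  | .abs t, σ, hσ => by
      simp only [msubT, dagT, bmsubT]
      have ih := msub_dagT t (fun k => renLE Nat.succ (σ k)) (fun k => EStk_renLE (hσ k) _)
      rw [show (fun k => dagE (renLE Nat.succ (σ k))) = (fun k => brenLE Nat.succ (dagE (σ k)))
        from funext fun k => dagE_renL (σ k) Nat.succ] at ih
      exact star_absC ih
  | .app u v, σ, hσ => by
      have ihu := msub_dagT u σ hσ
      have ihv := msub_dagT v σ hσ
      have eR : bmsubT (fun k => dagE (σ k)) (dagT (.app u v)) =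
          .mabs (.cut (brenMT Nat.succ (bmsubT (fun k => dagE (σ k)) (dagT v)))
            (.tmu (.cut (brenLT Nat.succ (brenMT Nat.succ (bmsubT (fun k => dagE (σ k)) (dagT u))))
              (.cons (.var 0) (.cvar 0))))) := by
        simp only [dagT, bmsubT, bmsubC, bmsubE, bmsubT_renM, bupsM, renM_bmsubT,
          renL_bmsubT, brenLM_T, brenLM_E, brenLE]
      rw [eR]
      simp only [msubT, dagT]
      refine Relation.ReflTransGen.trans
        (Relation.ReflTransGen.lift
          (fun x => BTm.mabs (.cut (brenMT Nat.succ x)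
            (.tmu (.cut (brenLT Nat.succ (brenMT Nat.succ (dagT (msubT σ u))))
              (.cons (.var 0) (.cvar 0))))))
          (fun a b h => JT.mabsC (JC.cutL _ (LBStepNT_renM Nat.succ Nat.succ_injective h))) _ _ ihv)
        (Relation.ReflTransGen.lift
          (fun x => BTm.mabs (.cut (brenMT Nat.succ (bmsubT (fun k => dagE (σ k)) (dagT v)))
            (.tmu (.cut (brenLT Nat.succ (brenMT Nat.succ x)) (.cons (.var 0) (.cvar 0))))))
          (fun a b h => JT.mabsC (JC.cutR _ (JE.tmuC (JC.cutL _
            (LBStepNT_renL Nat.succ Nat.succ_injective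
              (LBStepNT_renM Nat.succ Nat.succ_injective h)))))) _ _ ihu)
  | .mabs c, σ, hσ => by
      simp only [msubT, dagT, bmsubT]
      have ih := msub_dagC c (upsM σ) (EStk_upsM hσ)
      rw [dagE_upsM] at ih
      exact star_mabsC ih
theorem msub_dagC : ∀ (c : Cm) (σ : ℕ → Ct), (∀ k, EStk (σ k)) →
    Star LBStepNC (dagC (msubC σ c)) (bmsubC (fun k => dagE (σ k)) (dagC c))
  | .cmd a t, σ, hσ => by
      simp only [msubC, dagC, bmsubC, bmsubE]
      exact Relation.ReflTransGen.trans (fill_dag (hσ a) (msubT σ t))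
        (star_cutL _ (msub_dagT t σ hσ))
end
theorem sub0L_dag (t0 : Tm) : (fun k => dagT (sub0L t0 k)) = bsub0L (dagT t0) :=
  funext fun k => by cases k <;> rfl

theorem sub1M0_fun (s : BCt) : (fun k => bsub0M s (upr Nat.succ k)) = bsub1M 0 s :=
  funext fun k => by cases k with
    | zero => simp [upr, bsub0M, bsub1M]
    | succ k => simp [upr, bsub0M, bsub1M]

mutual
theorem simT : ∀ {t v : Tm}, StepNT t v →
    ∃ u : BTm, Star BStepNT (dagT t) u ∧ Star LBStepNT (dagT v) u
  | _, _, .root (RootTn.beta u0 t0) => by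
      set U := dagT u0 with hU
      set T := dagT t0 with hT
      refine ⟨blsubT (bsub0L T) U, ?_, ?_⟩
      · have e1 : blsubC (bsub0L (brenMT Nat.succ T))
            (.cut (brenLT Nat.succ (brenMT Nat.succ (.abs U))) (.cons (.var 0) (.cvar 0)))
            = .cut (brenMT Nat.succ (.abs U)) (.cons (brenMT Nat.succ T) (.cvar 0)) := by
          simp only [blsubC, blsubT, blsubE, blsubT_renL, brenMT]
          rw [blsubT_id (brenMT Nat.succ U)
            (bupsL fun k => bsub0L (brenMT Nat.succ T) k.succ)
            (fun k => by cases k <;> rfl)]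
          rfl
        have S1 : BStepNC (.cut (brenMT Nat.succ T)
            (.tmu (.cut (brenLT Nat.succ (brenMT Nat.succ (.abs U))) (.cons (.var 0) (.cvar 0)))))
            (.cut (brenMT Nat.succ (.abs U)) (.cons (brenMT Nat.succ T) (.cvar 0))) := by
          have h1 : BStepNC _ _ := JC.root (BRootCn.mutilde (brenMT Nat.succ T)
            (.cut (brenLT Nat.succ (brenMT Nat.succ (.abs U))) (.cons (.var 0) (.cvar 0))))
          rwa [e1] at h1
        have S2 : BStepNC (.cut (.abs (brenMT Nat.succ U)) (.cons (brenMT Nat.succ T) (.cvar 0)))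
            (.cut (brenMT Nat.succ T) (.tmu (.cut (brenMT Nat.succ U) (.cvar 0)))) :=
          JC.root (BRootCn.beta (brenMT Nat.succ U) (brenMT Nat.succ T) (.cvar 0))
        have e3 : blsubC (bsub0L (brenMT Nat.succ T)) (.cut (brenMT Nat.succ U) (.cvar 0))
            = .cut (brenMT Nat.succ (blsubT (bsub0L T) U)) (.cvar 0) := by
          simp only [blsubC, blsubT, blsubE]
          rw [renM_blsubT U (bsub0L T) Nat.succ, sub0L_renM]
        have S3 : BStepNC (.cut (brenMT Nat.succ T) (.tmu (.cut (brenMT Nat.succ U) (.cvar 0))))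
            (.cut (brenMT Nat.succ (blsubT (bsub0L T) U)) (.cvar 0)) := by
          have h3 : BStepNC _ _ := JC.root (BRootCn.mutilde (brenMT Nat.succ T)
            (.cut (brenMT Nat.succ U) (.cvar 0)))
          rwa [e3] at h3
        simp only [dagT]
        exact .head (JT.mabsC S1) (.head (JT.mabsC S2) (.head (JT.mabsC S3)
          (.single (JT.root (BRootT.theta _)))))
      · rw [dag_lsub u0 (sub0L t0), sub0L_dag]
  | _, _, .root (RootTn.mu c t0) => by
      set T := dagT t0 with hT
      set D := dagC c with hD
      set s : BCt := .cons (brenMT Nat.succ T) (.cvar 0) with hs_def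
      refine ⟨.mabs (bmsubC (bsub1M 0 s) D), ?_, ?_⟩
      · have e1 : blsubC (bsub0L (brenMT Nat.succ T))
            (.cut (brenLT Nat.succ (brenMT Nat.succ (.mabs D))) (.cons (.var 0) (.cvar 0)))
            = .cut (brenMT Nat.succ (.mabs D)) s := by
          simp only [blsubC, blsubT, blsubE, blsubC_renL, blsubT_renL, brenMT]
          rw [blsubC_id (brenMC (upr Nat.succ) D) (fun k => brenMT Nat.succ (bsub0L (brenMT Nat.succ T) k.succ)) (fun k => rfl)]
          rfl
        have S1 : BStepNC (.cut (brenMT Nat.succ T)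
            (.tmu (.cut (brenLT Nat.succ (brenMT Nat.succ (.mabs D))) (.cons (.var 0) (.cvar 0)))))
            (.cut (brenMT Nat.succ (.mabs D)) s) := by
          have h1 : BStepNC _ _ := JC.root (BRootCn.mutilde (brenMT Nat.succ T)
            (.cut (brenLT Nat.succ (brenMT Nat.succ (.mabs D))) (.cons (.var 0) (.cvar 0))))
          rwa [e1] at h1
        have e2 : bmsubC (bsub0M s) (brenMC (upr Nat.succ) D) = bmsubC (bsub1M 0 s) D := by
          rw [bmsubC_renM, sub1M0_fun]
        have S2 : BStepNC (.cut (.mabs (brenMC (upr Nat.succ) D)) s) (bmsubC (bsub1M 0 s) D) := by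
          have h2 : BStepNC _ _ := JC.root (BRootCn.mun (brenMC (upr Nat.succ) D) s
            (.cons _ (.cvar 0)))
          rwa [e2] at h2
        simp only [dagT]
        exact .head (JT.mabsC S1) (.single (JT.mabsC S2))
      · have hσ : ∀ k, EStk (sub1M 0 (Ct.cons (.cvar 0) (renMT Nat.succ t0)) k) := by
          intro k
          cases k with
          | zero => exact .cons _ (.cvar 0)
          | succ k => exact .cvar _
        have hfun : (fun k => dagE (sub1M 0 (Ct.cons (.cvar 0) (renMT Nat.succ t0)) k))
            = bsub1M 0 s := by
          funext k
          cases k with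
          | zero => simp [sub1M, bsub1M, dagE, dag_renM, hs_def, hT]
          | succ k => simp [sub1M, bsub1M, dagE]
        have ih := msub_dagC c (sub1M 0 (Ct.cons (.cvar 0) (renMT Nat.succ t0))) hσ
        rw [hfun] at ih
        simp only [dagT]
        exact star_mabsC ih
  | _, _, .root (RootTn.theta t0) => by
      refine ⟨dagT t0, ?_, .refl⟩
      simp only [dagT, dagC, dag_renM]
      exact .single (JT.root (BRootT.theta _))
  | _, _, .absC h => by
    obtain ⟨u, h1, h2⟩ := simT h
    exact ⟨.abs u, by simp only [dagT]; exact star_absC h1,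
      by simp only [dagT]; exact star_absC h2⟩
  | _, _, .appL w h => by
    obtain ⟨u, h1, h2⟩ := simT h
    refine ⟨.mabs (.cut (brenMT Nat.succ (dagT w))
      (.tmu (.cut (brenLT Nat.succ (brenMT Nat.succ u)) (.cons (.var 0) (.cvar 0))))), ?_, ?_⟩
    · simp only [dagT]
      exact Relation.ReflTransGen.lift
        (fun x => BTm.mabs (.cut (brenMT Nat.succ (dagT w))
          (.tmu (.cut (brenLT Nat.succ (brenMT Nat.succ x)) (.cons (.var 0) (.cvar 0))))))
        (fun a b hs => JT.mabsC (JC.cutR _ (JE.tmuC (JC.cutL _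
          (BStepNT_renL Nat.succ Nat.succ_injective
            (BStepNT_renM Nat.succ Nat.succ_injective hs)))))) _ _ h1
    · simp only [dagT]
      exact Relation.ReflTransGen.lift
        (fun x => BTm.mabs (.cut (brenMT Nat.succ (dagT w))
          (.tmu (.cut (brenLT Nat.succ (brenMT Nat.succ x)) (.cons (.var 0) (.cvar 0))))))
        (fun a b hs => JT.mabsC (JC.cutR _ (JE.tmuC (JC.cutL _
          (LBStepNT_renL Nat.succ Nat.succ_injective
            (LBStepNT_renM Nat.succ Nat.succ_injective hs)))))) _ _ h2
  | _, _, .appR t h => by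
    obtain ⟨u, h1, h2⟩ := simT h
    refine ⟨.mabs (.cut (brenMT Nat.succ u)
      (.tmu (.cut (brenLT Nat.succ (brenMT Nat.succ (dagT t))) (.cons (.var 0) (.cvar 0))))), ?_, ?_⟩
    · simp only [dagT]
      exact Relation.ReflTransGen.lift
        (fun x => BTm.mabs (.cut (brenMT Nat.succ x)
          (.tmu (.cut (brenLT Nat.succ (brenMT Nat.succ (dagT t))) (.cons (.var 0) (.cvar 0))))))
        (fun a b hs => JT.mabsC (JC.cutL _
          (BStepNT_renM Nat.succ Nat.succ_injective hs))) _ _ h1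
    · simp only [dagT]
      exact Relation.ReflTransGen.lift
        (fun x => BTm.mabs (.cut (brenMT Nat.succ x)
          (.tmu (.cut (brenLT Nat.succ (brenMT Nat.succ (dagT t))) (.cons (.var 0) (.cvar 0))))))
        (fun a b hs => JT.mabsC (JC.cutL _
          (LBStepNT_renM Nat.succ Nat.succ_injective hs))) _ _ h2
  | _, _, .mabsC h => by
    obtain ⟨u, h1, h2⟩ := simC h
    exact ⟨.mabs u, by simp only [dagT]; exact star_mabsC h1,
      by simp only [dagT]; exact star_mabsC h2⟩
theorem simC : ∀ {c d : Cm}, StepNC c d →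
    ∃ u : BCm, Star BStepNC (dagC c) u ∧ Star LBStepNC (dagC d) u
  | _, _, .root (RootC.rho b c) => by
      set D := dagC c with hD
      refine ⟨bmsubC (bsub0M (.cvar b)) D, ?_, ?_⟩
      · simp only [dagC, dagT]
        exact .single (JC.root (BRootCn.mun D (.cvar b) (.cvar b)))
      · have hσ : ∀ k, EStk (sub0M (Ct.cvar b) k) := by
          intro k
          cases k with
          | zero => exact .cvar _
          | succ k => exact .cvar _
        have hfun : (fun k => dagE (sub0M (Ct.cvar b) k)) = bsub0M (BCt.cvar b) := by
          funext k
          cases k with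
          | zero => rfl
          | succ k => rfl
        have ih := msub_dagC c (sub0M (Ct.cvar b)) hσ
        rw [hfun] at ih
        exact ih
  | _, _, .cmdC a h => by
    obtain ⟨u, h1, h2⟩ := simT h
    exact ⟨.cut u (.cvar a), by simp only [dagC]; exact star_cutL _ h1,
      by simp only [dagC]; exact star_cutL _ h2⟩
end
/-- call-by-name simulation of λμ by λ̄μμ̃.  If `t` reduces to
`v` by one call-by-name λμ-step, then there is `u` with `t† →n* u` and
`v† →lin-n* u`; and likewise for commands. -/
theorem cbn_lm_lmm_simulation :
    (∀ t v : Tm, StepNT t v →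
      ∃ u : BTm, Star BStepNT (dagT t) u ∧ Star LBStepNT (dagT v) u) ∧
    (∀ c d : Cm, StepNC c d →
      ∃ u : BCm, Star BStepNC (dagC c) u ∧ Star LBStepNC (dagC d) u) :=
  ⟨fun _ _ h => simT h, fun _ _ h => simC h⟩

end CHSim
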